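/- Let ε₁, ε₂ ∈ [0, 1/2) and suppose (1 − H(ε₁))/2 < 1 − H(ε₂). Then there exists a unique p* ∈ (0, 1/2) such that (1 − H(ε₁))·(1 − p*) = H(ε₂·(1 − 2p*) + p*) − H(ε₂); moreover the maximum over p ∈ [0,1] of min( (1 − H(ε₁))·(1 − p) , H(ε₂·(1 − 2p) + p) − H(ε₂) ) equals (1 − H(ε₁))·(1 − p*) and is attained at p = p*. Here H denotes the binary entropy function H(x) = −x·log₂(x) − (1 − x)·log₂(1 − x) for x ∈ [0,1], with the convention 0·log₂0 = 0. -/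
import Mathlib

/-- The binary entropy function `H(x) = −x·log₂ x − (1 − x)·log₂(1 − x)`
(with the convention `0·log₂ 0 = 0`, automatic since `Real.logb 2 0 = 0`). -/
noncomputable def binEnt (x : ℝ) : ℝ :=
  -(x * Real.logb 2 x) - (1 - x) * Real.logb 2 (1 - x)

lemma binEnt_eq (x : ℝ) : binEnt x = Real.binEntropy x / Real.log 2 := by
  unfold binEnt Real.binEntropy
  rw [Real.log_inv, Real.log_inv, Real.logb, Real.logb]
  ring

lemma binEnt_mono : MonotoneOn binEnt (Set.Icc (0:ℝ) 2⁻¹) := by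
  intro a ha b hb hab
  rw [binEnt_eq, binEnt_eq]
  have h := Real.binEntropy_strictMonoOn.monotoneOn ha hb hab
  have hl := Real.log_pos (by norm_num : (1:ℝ) < 2)
  exact div_le_div_of_nonneg_right h hl.le

lemma binEnt_half : binEnt (1/2 : ℝ) = 1 := by
  rw [show (1/2 : ℝ) = 2⁻¹ by norm_num, binEnt_eq, Real.binEntropy_two_inv,
    div_self (Real.log_ne_zero_of_pos_of_ne_one (by norm_num) (by norm_num))]

lemma binEnt_lt_one {x : ℝ} (hx : x ≠ 2⁻¹) : binEnt x < 1 := by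
  rw [binEnt_eq]
  rw [div_lt_one (Real.log_pos (by norm_num))]
  exact Real.binEntropy_lt_log_two.2 hx

/-- First case of Corollary 1: for BSC links with crossover probabilities
`ε₁, ε₂ ∈ [0,1/2)`, if `(1 − H(ε₁))/2 < 1 − H(ε₂)`, then there is a unique
`p* ∈ (0,1/2)` with `(1 − H(ε₁))·(1 − p*) = H(ε₂·(1 − 2p*) + p*) − H(ε₂)`, and the
maximum over `p ∈ [0,1]` of `min((1 − H(ε₁))·(1 − p), H(ε₂·(1 − 2p) + p) − H(ε₂))`
equals `(1 − H(ε₁))·(1 − p*)`, attained at `p = p*`. -/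
theorem stmt_10 (ε₁ ε₂ : ℝ) (hε₁ : ε₁ ∈ Set.Ico (0 : ℝ) (1 / 2))
    (hε₂ : ε₂ ∈ Set.Ico (0 : ℝ) (1 / 2))
    (hcond : (1 - binEnt ε₁) / 2 < 1 - binEnt ε₂) :
    ∃ p' ∈ Set.Ioo (0 : ℝ) (1 / 2),
      (1 - binEnt ε₁) * (1 - p') = binEnt (ε₂ * (1 - 2 * p') + p') - binEnt ε₂ ∧
      (∀ q ∈ Set.Ioo (0 : ℝ) (1 / 2),
        (1 - binEnt ε₁) * (1 - q) = binEnt (ε₂ * (1 - 2 * q) + q) - binEnt ε₂ →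
          q = p') ∧
      (∀ p ∈ Set.Icc (0 : ℝ) 1,
        min ((1 - binEnt ε₁) * (1 - p)) (binEnt (ε₂ * (1 - 2 * p) + p) - binEnt ε₂) ≤
          (1 - binEnt ε₁) * (1 - p')) ∧
      min ((1 - binEnt ε₁) * (1 - p'))
          (binEnt (ε₂ * (1 - 2 * p') + p') - binEnt ε₂) =
        (1 - binEnt ε₁) * (1 - p') := by
  obtain ⟨hε₁0, hε₁h⟩ := hε₁
  obtain ⟨hε₂0, hε₂h⟩ := hε₂
  set A : ℝ := 1 - binEnt ε₁ with hA
  have hA0 : 0 < A := by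
    have := binEnt_lt_one (x := ε₁) (by intro h; rw [h] at hε₁h; norm_num at hε₁h)
    linarith
  set F : ℝ → ℝ := fun p => A * (1 - p) - (binEnt (ε₂ * (1 - 2 * p) + p) - binEnt ε₂) with hF
  -- inner affine map
  have hinner : ∀ p : ℝ, ε₂ * (1 - 2 * p) + p = ε₂ + p * (1 - 2 * ε₂) := fun p => by ring
  have hinner_mem : ∀ p ∈ Set.Icc (0:ℝ) (1/2), ε₂ * (1 - 2 * p) + p ∈ Set.Icc (0:ℝ) 2⁻¹ := by
    intro p hp
    rw [hinner]
    constructor <;> nlinarith [hp.1, hp.2]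
  -- F strictly anti on [0,1/2]
  have hanti : StrictAntiOn F (Set.Icc (0:ℝ) (1/2)) := by
    intro a ha b hb hab
    have h1 : A * (1 - b) < A * (1 - a) := by nlinarith
    have h2 : binEnt (ε₂ * (1 - 2 * a) + a) ≤ binEnt (ε₂ * (1 - 2 * b) + b) := by
      apply binEnt_mono (hinner_mem a ha) (hinner_mem b hb)
      rw [hinner, hinner]; nlinarith
    simp only [hF]
    linarith
  have hcont : ContinuousOn F (Set.Icc (0:ℝ) (1/2)) := by
    have : Continuous F := by
      simp only [hF, binEnt_eq]
      fun_prop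
    exact this.continuousOn
  have hF0 : F 0 = A := by simp [hF]
  have hFh : F (1/2) < 0 := by
    have : ε₂ * (1 - 2 * (1/2:ℝ)) + (1/2:ℝ) = 1/2 := by ring
    simp only [hF, this, binEnt_half]
    linarith
  -- IVT
  have hivt : (0:ℝ) ∈ F '' Set.Ioo 0 (1/2) := by
    apply intermediate_value_Ioo' (by norm_num : (0:ℝ) ≤ 1/2) hcont
    exact ⟨hFh, by rw [hF0]; exact hA0⟩
  obtain ⟨p', hp'mem, hp'0⟩ := hivt
  have hp'Icc : p' ∈ Set.Icc (0:ℝ) (1/2) := Set.Ioo_subset_Icc_self hp'mem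
  have heq : A * (1 - p') = binEnt (ε₂ * (1 - 2 * p') + p') - binEnt ε₂ := by
    have := hp'0; simp only [hF] at this; linarith
  refine ⟨p', hp'mem, heq, ?_, ?_, ?_⟩
  · intro q hq hqeq
    have hqIcc : q ∈ Set.Icc (0:ℝ) (1/2) := Set.Ioo_subset_Icc_self hq
    have hFq : F q = 0 := by simp only [hF]; linarith
    by_contra hne
    rcases lt_or_gt_of_ne hne with h | h
    · have := hanti hqIcc hp'Icc h; rw [hFq, hp'0] at this; exact lt_irrefl _ this
    · have := hanti hp'Icc hqIcc h; rw [hFq, hp'0] at this; exact lt_irrefl _ this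
  · intro p hp
    rcases le_or_gt p p' with h | h
    · refine (min_le_right _ _).trans ?_
      rw [heq]
      have hpIcc : p ∈ Set.Icc (0:ℝ) (1/2) := ⟨hp.1, h.trans hp'Icc.2⟩
      have := binEnt_mono (hinner_mem p hpIcc) (hinner_mem p' hp'Icc)
        (by rw [hinner, hinner]; nlinarith [hp.1])
      linarith
    · refine (min_le_left _ _).trans ?_
      nlinarith
  · rw [← heq, min_self]
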